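/- Let Ω be a set and let ℰ be a nonempty set of functions Ω → ℝ that is closed under negation (φ ∈ ℰ implies −φ ∈ ℰ). Define d : Ω × Ω → [0,∞] by d(x,y) = sup { φ(y) − φ(x) : φ ∈ ℰ }, and assume d(x,y) < ∞ for all x, y ∈ Ω. Let n, m be positive integers, let k > 0, c ≥ 0, Γ ≥ 0, and let K : (0,∞) × Ω × Ω → ℂ satisfy |K(t,x,y)| ≤ Γ·t^{−n/(2m)}·exp( λ·(φ(y) − φ(x)) + (λ^{2m}·k + c)·t ) for every φ ∈ ℰ, every λ > 0, every t > 0 and all x, y ∈ Ω. Then, with σ' = (2m−1)·(2m)^{−2m/(2m−1)}·k^{−1/(2m−1)}, one has |K(t,x,y)| ≤ Γ·t^{−n/(2m)}·exp( −σ'·d(x,y)^{2m/(2m−1)}·t^{−1/(2m−1)} + c·t ) for all t > 0 and x, y ∈ Ω. -/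
import Mathlib


open Real Set Filter Topology

/-- Let `ℰ` be a nonempty set of functions `Ω → ℝ` closed under
negation and let `d(x,y) = sup {φ(y) − φ(x) : φ ∈ ℰ}` be finite for all `x, y`
(formalized: `d x y` is the least upper bound of that set of reals). If
`|K(t,x,y)| ≤ Γ·t^(−n/(2m))·exp(λ·(φ(y)−φ(x)) + (λ^(2m)·k + c)·t)` for every `φ ∈ ℰ`,
`λ > 0`, `t > 0`, `x, y`, then with `σ' = (2m−1)·(2m)^(−2m/(2m−1))·k^(−1/(2m−1))` one has
`|K(t,x,y)| ≤ Γ·t^(−n/(2m))·exp(−σ'·d(x,y)^(2m/(2m−1))·t^(−1/(2m−1)) + c·t)`. -/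
theorem statement10 {Ω : Type*} (E : Set (Ω → ℝ)) (hE_ne : E.Nonempty)
    (hE_neg : ∀ φ ∈ E, -φ ∈ E)
    (d : Ω → Ω → ℝ)
    (hd : ∀ x y : Ω, IsLUB {r : ℝ | ∃ φ ∈ E, r = φ y - φ x} (d x y))
    (n m : ℕ) (hn : 0 < n) (hm : 0 < m)
    (k c Γ : ℝ) (hk : 0 < k) (hc : 0 ≤ c) (hΓ : 0 ≤ Γ)
    (K : ℝ → Ω → Ω → ℂ)
    (hbound : ∀ φ ∈ E, ∀ lam : ℝ, 0 < lam → ∀ t : ℝ, 0 < t → ∀ x y : Ω,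
      ‖K t x y‖ ≤ Γ * t ^ (-(n : ℝ) / (2 * (m : ℝ))) *
        Real.exp (lam * (φ y - φ x) + (lam ^ (2 * (m : ℝ)) * k + c) * t)) :
    ∀ t : ℝ, 0 < t → ∀ x y : Ω,
      ‖K t x y‖ ≤ Γ * t ^ (-(n : ℝ) / (2 * (m : ℝ))) *
        Real.exp (-((2 * (m : ℝ) - 1) * (2 * (m : ℝ)) ^ (-(2 * (m : ℝ)) / (2 * (m : ℝ) - 1)) *
            k ^ (-(1 : ℝ) / (2 * (m : ℝ) - 1))) *
          d x y ^ (2 * (m : ℝ) / (2 * (m : ℝ) - 1)) * t ^ (-(1 : ℝ) / (2 * (m : ℝ) - 1)) +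
          c * t) := by
  intro t ht x y
  set P : ℝ := 2 * (m : ℝ) with hPdef
  have hm1 : (1 : ℝ) ≤ (m : ℝ) := by exact_mod_cast hm
  have hP2 : (2 : ℝ) ≤ P := by rw [hPdef]; linarith
  have hPpos : 0 < P := by linarith
  have hQpos : 0 < P - 1 := by linarith
  set Q : ℝ := P - 1 with hQdef
  set D : ℝ := d x y with hDdef
  -- D ≥ 0
  obtain ⟨φ₀, hφ₀⟩ := hE_ne
  have hub := (hd x y).1
  have hDnn : 0 ≤ D := by
    have h1 : φ₀ y - φ₀ x ≤ D := hub ⟨φ₀, hφ₀, rfl⟩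
    have h2 : (-φ₀) y - (-φ₀) x ≤ D := hub ⟨-φ₀, hE_neg _ hφ₀, rfl⟩
    simp only [Pi.neg_apply] at h2
    linarith
  -- Step 1: optimized-in-φ bound
  have step1 : ∀ lam : ℝ, 0 < lam →
      ‖K t x y‖ ≤ Γ * t ^ (-(n : ℝ) / P) *
        Real.exp (lam * (-D) + (lam ^ P * k + c) * t) := by
    intro lam hlam
    set F : ℝ → ℝ := fun ε => Γ * t ^ (-(n : ℝ) / P) *
        Real.exp (lam * (-D + ε) + (lam ^ P * k + c) * t) with hF
    have hcont : ContinuousAt F 0 := by fun_prop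
    have hlim : Tendsto F (𝓝[>] (0:ℝ)) (𝓝 (F 0)) :=
      (hcont.continuousWithinAt).tendsto
    have hF0 : F 0 = Γ * t ^ (-(n : ℝ) / P) *
        Real.exp (lam * (-D) + (lam ^ P * k + c) * t) := by simp [hF]
    rw [← hF0]
    refine ge_of_tendsto hlim ?_
    filter_upwards [self_mem_nhdsWithin] with ε hε
    have hε' : (0:ℝ) < ε := hε
    obtain ⟨r, ⟨φ, hφ, rfl⟩, hr, -⟩ := (hd x y).exists_between (show D - ε < D by linarith)
    have hb := hbound (-φ) (hE_neg _ hφ) lam hlam t ht x y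
    refine hb.trans ?_
    have hφle : (-φ) y - (-φ) x ≤ -D + ε := by
      simp only [Pi.neg_apply]; linarith
    have hexp : lam * ((-φ) y - (-φ) x) + (lam ^ P * k + c) * t
        ≤ lam * (-D + ε) + (lam ^ P * k + c) * t := by
      have := mul_le_mul_of_nonneg_left hφle hlam.le
      linarith
    exact mul_le_mul_of_nonneg_left (Real.exp_le_exp.mpr hexp)
      (mul_nonneg hΓ (Real.rpow_nonneg ht.le _))
  rcases eq_or_lt_of_le hDnn with hD0 | hDpos
  · -- D = 0 case: take λ → 0⁺
    have hDz : D = 0 := hD0.symm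
    have hDpow : D ^ (P / Q) = 0 := by
      rw [hDz]; exact Real.zero_rpow (by positivity)
    have hgoal : -(Q * P ^ (-P / Q) * k ^ (-(1:ℝ) / Q)) * D ^ (P / Q) * t ^ (-(1:ℝ) / Q)
        + c * t = c * t := by rw [hDpow]; ring
    rw [hgoal]
    set G : ℝ → ℝ := fun lam => Γ * t ^ (-(n : ℝ) / P) *
        Real.exp ((lam ^ P * k + c) * t) with hG
    have hcontpow : ContinuousAt (fun lam : ℝ => lam ^ P) 0 :=
      Real.continuousAt_rpow_const 0 P (Or.inr hPpos.le)
    have hcont : ContinuousAt G 0 := by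
      apply ContinuousAt.mul continuousAt_const
      exact Real.continuous_exp.continuousAt.comp
        (((hcontpow.mul continuousAt_const).add continuousAt_const).mul continuousAt_const)
    have hG0 : G 0 = Γ * t ^ (-(n : ℝ) / P) * Real.exp (c * t) := by
      simp [hG, Real.zero_rpow hPpos.ne']
    have hlim : Tendsto G (𝓝[>] (0:ℝ)) (𝓝 (Γ * t ^ (-(n : ℝ) / P) * Real.exp (c * t))) := by
      rw [← hG0]; exact hcont.continuousWithinAt.tendsto
    refine ge_of_tendsto hlim ?_
    filter_upwards [self_mem_nhdsWithin] with lam hlam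
    have h := step1 lam hlam
    rw [hDz] at h
    simpa [hG] using h
  · -- D > 0 case: optimal λ
    set lam : ℝ := (D / (P * k * t)) ^ ((1:ℝ) / Q) with hlamdef
    have hbase : 0 < D / (P * k * t) := by positivity
    have hlam : 0 < lam := Real.rpow_pos_of_pos hbase _
    have hloglam : Real.log lam
        = (1 / Q) * (Real.log D - (Real.log P + Real.log k + Real.log t)) := by
      rw [hlamdef, Real.log_rpow hbase,
        Real.log_div hDpos.ne' (by positivity),
        Real.log_mul (mul_pos hPpos hk).ne' ht.ne',
        Real.log_mul hPpos.ne' hk.ne']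
    have hXpos : 0 < P ^ (-P / Q) * k ^ (-(1:ℝ) / Q) * D ^ (P / Q) * t ^ (-(1:ℝ) / Q) := by
      have := Real.rpow_pos_of_pos hPpos (-P / Q)
      have := Real.rpow_pos_of_pos hk (-(1:ℝ) / Q)
      have := Real.rpow_pos_of_pos hDpos (P / Q)
      have := Real.rpow_pos_of_pos ht (-(1:ℝ) / Q)
      positivity
    have hlogX : Real.log (P ^ (-P / Q) * k ^ (-(1:ℝ) / Q) * D ^ (P / Q) * t ^ (-(1:ℝ) / Q))
        = (-P / Q) * Real.log P + (-(1:ℝ) / Q) * Real.log k + (P / Q) * Real.log D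
          + (-(1:ℝ) / Q) * Real.log t := by
      rw [Real.log_mul (mul_pos (mul_pos (Real.rpow_pos_of_pos hPpos _)
            (Real.rpow_pos_of_pos hk _)) (Real.rpow_pos_of_pos hDpos _)).ne'
          (Real.rpow_pos_of_pos ht _).ne',
        Real.log_mul (mul_pos (Real.rpow_pos_of_pos hPpos _)
            (Real.rpow_pos_of_pos hk _)).ne' (Real.rpow_pos_of_pos hDpos _).ne',
        Real.log_mul (Real.rpow_pos_of_pos hPpos _).ne' (Real.rpow_pos_of_pos hk _).ne',
        Real.log_rpow hPpos, Real.log_rpow hk, Real.log_rpow hDpos, Real.log_rpow ht]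
    have hA : lam ^ P * k * t
        = P ^ (-P / Q) * k ^ (-(1:ℝ) / Q) * D ^ (P / Q) * t ^ (-(1:ℝ) / Q) := by
      have h1 : 0 < lam ^ P * k * t :=
        mul_pos (mul_pos (Real.rpow_pos_of_pos hlam _) hk) ht
      apply Real.log_injOn_pos (mem_Ioi.mpr h1) (mem_Ioi.mpr hXpos)
      rw [Real.log_mul (mul_pos (Real.rpow_pos_of_pos hlam _) hk).ne' ht.ne',
        Real.log_mul (Real.rpow_pos_of_pos hlam _).ne' hk.ne',
        Real.log_rpow hlam, hlogX, hloglam]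
      field_simp
      ring
    have hB : lam * D
        = P * (P ^ (-P / Q) * k ^ (-(1:ℝ) / Q) * D ^ (P / Q) * t ^ (-(1:ℝ) / Q)) := by
      have h1 : 0 < lam * D := mul_pos hlam hDpos
      apply Real.log_injOn_pos (mem_Ioi.mpr h1) (mem_Ioi.mpr (mul_pos hPpos hXpos))
      rw [Real.log_mul hlam.ne' hDpos.ne', Real.log_mul hPpos.ne' hXpos.ne',
        hlogX, hloglam]
      field_simp
      ring
    have hexp : lam * (-D) + (lam ^ P * k + c) * t =
        -(Q * P ^ (-P / Q) * k ^ (-(1:ℝ) / Q)) * D ^ (P / Q) * t ^ (-(1:ℝ) / Q) + c * t := by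
      have e0 : lam * (-D) + (lam ^ P * k + c) * t
          = -(lam * D) + lam ^ P * k * t + c * t := by ring
      rw [e0, hA, hB, hQdef]
      ring
    have h := step1 lam hlam
    rw [hexp] at h
    exact h
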